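/- Let K be a measurable space, F a real normed vector space, f ↦ ν_f an energy-measure assignment on (F, K), and ν a minimal energy-dominant measure. Let (f_i)_{i∈ℕ} be a sequence in F whose linear span is dense in F, fix versions Z^{i,j} of the Radon–Nikodym derivatives dν_{f_i,f_j}/dν, and define p(x) := sup_{N∈ℕ} rank (Z^{i,j}(x))_{i,j≤N} ∈ ℤ₊ ∪ {+∞}. Then for every N ∈ ℕ and all g₁, …, g_N ∈ F, one has rank ((dν_{g_i,g_j}/dν)(x))_{i,j≤N} ≤ p(x) for ν-a.e. x ∈ K. -/

import Mathlib

open MeasureTheory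

/-- The mutual measure value `ν_{f,g}(B) := (ν_{f+g}(B) − ν_f(B) − ν_g(B))/2`. -/
noncomputable def mutualEM {F K : Type*} [MeasurableSpace K] [Add F]
    (em : F → Measure K) (f g : F) (B : Set K) : ℝ :=
  ((em (f + g) B).toReal - (em f B).toReal - (em g B).toReal) / 2

/-- An energy-measure assignment on `(F, K)`: each `f : F` is assigned a finite measure `ν_f`
on `K` such that (a) for every measurable `B`, `(f, g) ↦ ν_{f,g}(B)` is a (symmetric) bilinear
form on `F`, and (b) `(√(ν_f B) − √(ν_g B))² ≤ ν_{f−g}(B) ≤ 2‖f − g‖²` for all measurable `B`.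
(Symmetry of the mutual form is automatic from its definition.) -/
structure EnergyMeasureAssignment (F K : Type*) [MeasurableSpace K]
    [NormedAddCommGroup F] [NormedSpace ℝ F] where
  em : F → Measure K
  finite : ∀ f, IsFiniteMeasure (em f)
  add_left : ∀ (f₁ f₂ g : F) (B : Set K), MeasurableSet B →
    mutualEM em (f₁ + f₂) g B = mutualEM em f₁ g B + mutualEM em f₂ g B
  smul_left : ∀ (c : ℝ) (f g : F) (B : Set K), MeasurableSet B →
    mutualEM em (c • f) g B = c * mutualEM em f g B
  sqrt_diff_le : ∀ (f g : F) (B : Set K), MeasurableSet B →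
    (Real.sqrt (em f B).toReal - Real.sqrt (em g B).toReal) ^ 2 ≤ (em (f - g) B).toReal
  le_norm : ∀ (f g : F) (B : Set K), MeasurableSet B →
    (em (f - g) B).toReal ≤ 2 * ‖f - g‖ ^ 2

/-- `ν` is a minimal energy-dominant measure: it is σ-finite, dominates every energy measure,
and is absolutely continuous with respect to any other σ-finite measure that does so. -/
def IsMinimalEnergyDominant {F K : Type*} [MeasurableSpace K]
    [NormedAddCommGroup F] [NormedSpace ℝ F]
    (E : EnergyMeasureAssignment F K) (ν : Measure K) : Prop :=
  SigmaFinite ν ∧ (∀ f, E.em f ≪ ν) ∧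
    ∀ ν' : Measure K, SigmaFinite ν' → (∀ f, E.em f ≪ ν') → ν ≪ ν'

section Aux

open Filter Matrix

/-! ### Auxiliary facts about ranks of matrices -/

private lemma exists_indep_cols {N r : ℕ} {B : Matrix (Fin N) (Fin N) ℝ} (h : r < B.rank) :
    ∃ v : Fin (r+1) → Fin N, LinearIndependent ℝ (fun t => Bᵀ (v t)) := by
  classical
  obtain ⟨b, hb_sub, hb_span, hb_ind⟩ := exists_linearIndependent ℝ (Set.range Bᵀ)
  have hbfin : b.Finite := (Set.finite_range Bᵀ).subset hb_sub
  haveI := hbfin.fintype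
  have hcard : r + 1 ≤ Fintype.card b := by
    have h1 : B.rank = b.toFinset.card := by
      rw [Matrix.rank_eq_finrank_span_cols, show Set.range B.col = Set.range Bᵀ from rfl, ← hb_span, finrank_span_set_eq_card hb_ind]
    rw [Set.toFinset_card] at h1
    omega
  obtain ⟨emb⟩ : Nonempty (Fin (r+1) ↪ b) := by
    apply Function.Embedding.nonempty_of_card_le
    simpa using hcard
  have hmem : ∀ t : Fin (r+1), (emb t : Fin N → ℝ) ∈ Set.range Bᵀ := fun t => hb_sub (emb t).2
  choose v hv using hmem
  refine ⟨v, ?_⟩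
  have : (fun t => Bᵀ (v t)) = (fun x : b => (x : Fin N → ℝ)) ∘ emb := by
    ext t i; rw [hv t]; rfl
  rw [this]
  exact hb_ind.comp emb emb.injective

/-- Lower semicontinuity of rank: an entrywise limit of matrices of rank `≤ r` has rank `≤ r`. -/
private lemma rank_le_of_tendsto {N r : ℕ} {A : ℕ → Matrix (Fin N) (Fin N) ℝ}
    {B : Matrix (Fin N) (Fin N) ℝ}
    (hconv : ∀ i j, Tendsto (fun n => A n i j) atTop (nhds (B i j)))
    (hr : ∀ n, (A n).rank ≤ r) : B.rank ≤ r := by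
  by_contra hlt
  push_neg at hlt
  obtain ⟨v, hv⟩ := exists_indep_cols hlt
  set D : Matrix (Fin (r+1)) (Fin N) ℝ := Bᵀ.submatrix v id with hD
  set Dn : ℕ → Matrix (Fin (r+1)) (Fin N) ℝ := fun n => (A n)ᵀ.submatrix v id with hDn
  have hrankD : D.rank = r + 1 := by
    have : LinearIndependent ℝ D := by
      have : D = fun t => Bᵀ (v t) := rfl
      rw [this]; exact hv
    rw [(show LinearIndependent ℝ D.row from this).rank_matrix, Fintype.card_fin]
  have hdet : (D * Dᵀ).det ≠ 0 := by
    intro h0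
    obtain ⟨w, hw0, hww⟩ := (Matrix.exists_mulVec_eq_zero_iff).mpr h0
    have hker : w ∈ LinearMap.ker (D * Dᵀ).mulVecLin := hww
    have h1 : (D * Dᵀ).rank + Module.finrank ℝ (LinearMap.ker (D * Dᵀ).mulVecLin) = r + 1 := by
      have := LinearMap.finrank_range_add_finrank_ker (D * Dᵀ).mulVecLin
      simpa [Matrix.rank] using this
    have h2 : (D * Dᵀ).rank = r + 1 := by rw [Matrix.rank_self_mul_transpose, hrankD]
    have h3 : Module.finrank ℝ (LinearMap.ker (D * Dᵀ).mulVecLin) = 0 := by omega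
    have h4 : LinearMap.ker (D * Dᵀ).mulVecLin = ⊥ :=
      Submodule.finrank_eq_zero.mp h3
    rw [h4] at hker
    exact hw0 ((Submodule.mem_bot ℝ).mp hker)
  have hconvG : Tendsto (fun n => (Dn n * (Dn n)ᵀ).det) atTop (nhds (D * Dᵀ).det) := by
    apply Filter.Tendsto.comp (Continuous.tendsto (continuous_id.matrix_det) _)
    refine tendsto_pi_nhds.2 ?_
    intro s
    rw [tendsto_pi_nhds]
    intro t
    have : ∀ n, (Dn n * (Dn n)ᵀ) s t = ∑ i, A n i (v s) * A n i (v t) := by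
      intro n
      simp [Matrix.mul_apply, hDn, Matrix.transpose_apply, Matrix.submatrix_apply]
    simp only [this]
    have hlim : (D * Dᵀ) s t = ∑ i, B i (v s) * B i (v t) := by
      simp [Matrix.mul_apply, hD, Matrix.transpose_apply, Matrix.submatrix_apply]
    rw [hlim]
    exact tendsto_finset_sum _ fun i _ => ((hconv i (v s)).mul (hconv i (v t)))
  obtain ⟨n, hn⟩ := (hconvG.eventually_ne hdet).exists
  have h5 : (Dn n * (Dn n)ᵀ).rank = r + 1 := by
    rw [Matrix.rank_of_isUnit, Fintype.card_fin]
    exact (Matrix.isUnit_iff_isUnit_det _).mpr (isUnit_iff_ne_zero.mpr hn)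
  have h6 : (Dn n * (Dn n)ᵀ).rank ≤ (Dn n).rank := Matrix.rank_mul_le_left _ _
  have h7 : (Dn n).rank ≤ (A n)ᵀ.rank := by
    rw [Matrix.rank_eq_finrank_span_row, Matrix.rank_eq_finrank_span_row]
    apply Submodule.finrank_mono
    apply Submodule.span_mono
    rintro x ⟨t, rfl⟩
    exact ⟨v t, rfl⟩
  have h8 := hr n
  rw [← Matrix.rank_transpose (A n)] at h8
  omega

/-! ### Auxiliary integration facts -/

private lemma integral_abs_le_two_mul {K : Type*} [MeasurableSpace K] (ν : Measure K) (u : K → ℝ)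
    (hm : Measurable u) (hi : Integrable u ν) (c : ℝ)
    (hb : ∀ B : Set K, MeasurableSet B → |∫ x in B, u x ∂ν| ≤ c) :
    ∫ x, |u x| ∂ν ≤ 2 * c := by
  set P := {x | 0 ≤ u x} with hPdef
  have hP : MeasurableSet P := measurableSet_le measurable_const hm
  have h1 : ∫ x in P, |u x| ∂ν = ∫ x in P, u x ∂ν :=
    setIntegral_congr_fun hP (fun x hx => abs_of_nonneg hx)
  have h2 : ∫ x in Pᶜ, |u x| ∂ν = -∫ x in Pᶜ, u x ∂ν := by
    rw [← integral_neg]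
    refine setIntegral_congr_fun hP.compl (fun x hx => ?_)
    have : ¬ (0 ≤ u x) := hx
    exact abs_of_neg (lt_of_not_ge this)
  have h3 : ∫ x, |u x| ∂ν = ∫ x in P, |u x| ∂ν + ∫ x in Pᶜ, |u x| ∂ν :=
    (integral_add_compl hP hi.abs).symm
  have b1 := abs_le.mp (hb P hP)
  have b2 := abs_le.mp (hb Pᶜ hP.compl)
  rw [h3, h1, h2]
  linarith [b1.2, b2.1]

set_option maxHeartbeats 1000000 in
private lemma ae_tendsto_zero_of_integral_abs_le {K : Type*} [MeasurableSpace K] (ν : Measure K)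
    (u : ℕ → K → ℝ) (hmeas : ∀ n, Measurable (u n)) (hint : ∀ n, Integrable (u n) ν)
    (c : ℝ) (hc : 0 ≤ c) (hbd : ∀ n, ∫ x, |u n x| ∂ν ≤ c * (1/2)^n) :
    ∀ᵐ x ∂ν, Tendsto (fun n => u n x) atTop (nhds 0) := by
  have key : ∫⁻ x, ∑' n, (‖u n x‖₊ : ENNReal) ∂ν < ⊤ := by
    rw [lintegral_tsum (fun n => ((hmeas n).nnnorm.coe_nnreal_ennreal).aemeasurable)]
    calc ∑' n, ∫⁻ x, (‖u n x‖₊ : ENNReal) ∂ν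
        ≤ ∑' n, ENNReal.ofReal (c * (1/2)^n) := by
          refine ENNReal.tsum_le_tsum fun n => ?_
          erw [← ofReal_integral_norm_eq_lintegral_enorm (hint n)]
          refine ENNReal.ofReal_le_ofReal ?_
          simpa [Real.norm_eq_abs] using hbd n
      _ = ENNReal.ofReal c * ∑' n, (ENNReal.ofReal (1/2))^n := by
          rw [← ENNReal.tsum_mul_left]
          congr 1
          funext n
          rw [← ENNReal.ofReal_pow (by norm_num), ← ENNReal.ofReal_mul hc]
      _ < ⊤ := by
          rw [ENNReal.tsum_geometric]
          refine ENNReal.mul_lt_top ENNReal.ofReal_lt_top ?_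
          refine ENNReal.inv_lt_top.mpr ?_
          refine tsub_pos_iff_lt.mpr ?_
          exact ENNReal.ofReal_lt_one.mpr (by norm_num)
  have hmeas' : Measurable fun x => ∑' n, (‖u n x‖₊ : ENNReal) :=
    Measurable.ennreal_tsum fun n => (hmeas n).nnnorm.coe_nnreal_ennreal
  have hae := ae_lt_top hmeas' key.ne
  filter_upwards [hae] with x hx
  have hsum : Summable fun n => ‖u n x‖₊ :=
    ENNReal.tsum_coe_ne_top_iff_summable.mp hx.ne
  have hsum' : Summable fun n => ‖u n x‖ := by
    have := NNReal.summable_coe.mpr hsum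
    simpa [coe_nnnorm] using this
  rw [tendsto_zero_iff_norm_tendsto_zero]
  exact hsum'.tendsto_atTop_zero

/-! ### Auxiliary facts on the mutual energy form -/

namespace EMAaux

variable {F K : Type*} [MeasurableSpace K] [NormedAddCommGroup F] [NormedSpace ℝ F]
  (E : EnergyMeasureAssignment F K) {B : Set K} (hB : MeasurableSet B)

include hB

omit hB in
lemma symm (f g : F) : mutualEM E.em f g B = mutualEM E.em g f B := by
  unfold mutualEM; rw [add_comm]; ring

lemma zero_left (g : F) : mutualEM E.em 0 g B = 0 := by
  have := E.smul_left 0 0 g B hB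
  simpa using this

lemma add_right (f g₁ g₂ : F) : mutualEM E.em f (g₁ + g₂) B
    = mutualEM E.em f g₁ B + mutualEM E.em f g₂ B := by
  rw [symm, E.add_left _ _ _ _ hB, symm, symm E g₂]

lemma smul_right (c : ℝ) (f g : F) :
    mutualEM E.em f (c • g) B = c * mutualEM E.em f g B := by
  rw [symm, E.smul_left _ _ _ _ hB, symm]

lemma sub_left (f₁ f₂ g : F) : mutualEM E.em (f₁ - f₂) g B
    = mutualEM E.em f₁ g B - mutualEM E.em f₂ g B := by
  have h := E.add_left (f₁ - f₂) f₂ g B hB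
  rw [sub_add_cancel] at h
  linarith

lemma sub_right (f g₁ g₂ : F) : mutualEM E.em f (g₁ - g₂) B
    = mutualEM E.em f g₁ B - mutualEM E.em f g₂ B := by
  rw [symm, sub_left E hB, symm, symm E g₂]

lemma em_zero : ((E.em 0 : Measure K) B).toReal = 0 := by
  have h := zero_left E hB (0 : F)
  unfold mutualEM at h
  simp only [add_zero] at h
  linarith

lemma q_nonneg (h : F) : 0 ≤ mutualEM E.em h h B := by
  classical
  set q : ℝ := mutualEM E.em h h B with hq
  set a : ℕ → ℝ := fun n => (E.em ((n : ℝ) • h) B).toReal with ha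
  have ha0 : a 0 = 0 := by
    simp only [ha, Nat.cast_zero, zero_smul]
    exact em_zero E hB
  have ha1 : a 1 = (E.em h B).toReal := by simp [ha]
  have hrec : ∀ n : ℕ, a (n + 1) = a n + a 1 + 2 * n * q := by
    intro n
    have h1 : mutualEM E.em ((n : ℝ) • h) h B = n * q := by
      rw [E.smul_left _ _ _ _ hB, hq]
    have h2 : mutualEM E.em ((n : ℝ) • h) h B
        = ((E.em ((n : ℝ) • h + h) B).toReal - a n - a 1) / 2 := by
      rw [ha1]; rfl
    have h3 : (n : ℝ) • h + h = ((n + 1 : ℕ) : ℝ) • h := by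
      push_cast
      rw [add_smul, one_smul]
    rw [h3] at h2
    have : a (n+1) = (E.em (((n + 1 : ℕ) : ℝ) • h) B).toReal := rfl
    rw [h1] at h2
    rw [this]
    linarith
  have hclosed : ∀ n : ℕ, a n = n * a 1 + ((n : ℝ)^2 - n) * q := by
    intro n
    induction n with
    | zero => simpa using ha0
    | succ n ih =>
      rw [hrec n, ih]
      push_cast
      ring
  by_contra hq0
  push_neg at hq0
  have ha1nn : 0 ≤ a 1 := ENNReal.toReal_nonneg
  obtain ⟨n, hn⟩ := exists_nat_gt (a 1 / (-q) + 1)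
  have hnpos : (1 : ℝ) ≤ n := by
    have : 0 ≤ a 1 / (-q) := div_nonneg ha1nn (by linarith)
    linarith
  have h1 : a 1 < ((n : ℝ) - 1) * (-q) := by
    rw [← div_lt_iff₀ (by linarith : (0:ℝ) < -q)] at *
    linarith
  have h2 : 0 ≤ a n := ENNReal.toReal_nonneg
  rw [hclosed n] at h2
  nlinarith

lemma q_le_norm (h : F) : mutualEM E.em h h B ≤ 4 * ‖h‖ ^ 2 := by
  have h1 : (E.em (h + h) B).toReal ≤ 2 * ‖h + h‖ ^ 2 := by
    have := E.le_norm (h + h) 0 B hB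
    simpa using this
  have h2 : ‖h + h‖ ≤ 2 * ‖h‖ := by
    calc ‖h + h‖ ≤ ‖h‖ + ‖h‖ := norm_add_le _ _
    _ = 2 * ‖h‖ := by ring
  have h3 : 0 ≤ (E.em h B).toReal := ENNReal.toReal_nonneg
  have h4 : ‖h + h‖ ^ 2 ≤ (2 * ‖h‖)^2 := by
    apply pow_le_pow_left₀ (norm_nonneg _) h2
  unfold mutualEM
  nlinarith

lemma cauchy_schwarz (f g : F) :
    (mutualEM E.em f g B) ^ 2 ≤ mutualEM E.em f f B * mutualEM E.em g g B := by
  have key : ∀ t : ℝ, 0 ≤ mutualEM E.em g g B * (t * t)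
      + (2 * mutualEM E.em f g B) * t + mutualEM E.em f f B := by
    intro t
    have h0 := q_nonneg E hB (f + t • g)
    have h1 : mutualEM E.em (f + t • g) (f + t • g) B
        = mutualEM E.em f f B + 2 * t * mutualEM E.em f g B
          + t^2 * mutualEM E.em g g B := by
      rw [E.add_left _ _ _ _ hB, add_right E hB, add_right E hB,
        E.smul_left _ _ _ _ hB, smul_right E hB, smul_right E hB,
        E.smul_left _ _ _ _ hB, symm E g f]
      ring
    rw [h1] at h0
    nlinarith
  have hd := discrim_le_zero key
  unfold discrim at hd
  nlinarith

lemma abs_le (f g : F) : |mutualEM E.em f g B| ≤ 4 * ‖f‖ * ‖g‖ := by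
  have h1 := cauchy_schwarz E hB f g
  have h2 := q_le_norm E hB f
  have h3 := q_le_norm E hB g
  have h4 := q_nonneg E hB f
  have h5 := q_nonneg E hB g
  have h6 : (mutualEM E.em f g B)^2 ≤ (4 * ‖f‖ * ‖g‖)^2 := by
    have hf : (0:ℝ) ≤ ‖f‖^2 := sq_nonneg _
    have hg : (0:ℝ) ≤ ‖g‖^2 := sq_nonneg _
    calc (mutualEM E.em f g B)^2 ≤ mutualEM E.em f f B * mutualEM E.em g g B := h1
    _ ≤ (4 * ‖f‖^2) * (4 * ‖g‖^2) := by nlinarith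
    _ = (4 * ‖f‖ * ‖g‖)^2 := by ring
  have h7 : (0:ℝ) ≤ 4 * ‖f‖ * ‖g‖ := by positivity
  nlinarith [abs_nonneg (mutualEM E.em f g B), sq_abs (mutualEM E.em f g B)]

lemma sum_left {ι : Type*} (s : Finset ι) (a : ι → ℝ) (v : ι → F) (g : F) :
    mutualEM E.em (∑ k ∈ s, a k • v k) g B = ∑ k ∈ s, a k * mutualEM E.em (v k) g B := by
  classical
  induction s using Finset.induction_on with
  | empty => simpa using zero_left E hB g
  | insert k s hk ih =>
    rw [Finset.sum_insert hk, Finset.sum_insert hk, E.add_left _ _ _ _ hB,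
      E.smul_left _ _ _ _ hB, ih]

lemma sum_right {ι : Type*} (s : Finset ι) (a : ι → ℝ) (v : ι → F) (g : F) :
    mutualEM E.em g (∑ k ∈ s, a k • v k) B = ∑ k ∈ s, a k * mutualEM E.em g (v k) B := by
  rw [symm, sum_left E hB]
  exact Finset.sum_congr rfl fun k _ => by rw [symm]

end EMAaux

end Aux

/-- Proposition 2.7 of the paper: with `(f i)` a sequence whose span is dense in `F` and
`Z i j` fixed versions of the densities `dν_{f_i,f_j}/dν`, the function
`p(x) = sup_N rank (Z^{i,j}(x))_{i,j<N}` dominates, ν-a.e., the rank of the density matrix of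
any finite family `g₁, …, g_N ∈ F` (for any versions `W` of its densities). -/
theorem stmt11 {F K : Type*} [MeasurableSpace K] [NormedAddCommGroup F] [NormedSpace ℝ F]
    (E : EnergyMeasureAssignment F K) (ν : Measure K)
    (hν : IsMinimalEnergyDominant E ν)
    (f : ℕ → F) (hdense : Dense (Submodule.span ℝ (Set.range f) : Set F))
    (Z : ℕ → ℕ → K → ℝ)
    (hZmeas : ∀ i j, Measurable (Z i j))
    (hZint : ∀ i j, Integrable (Z i j) ν)
    (hZ : ∀ (i j : ℕ) (B : Set K), MeasurableSet B →
      mutualEM E.em (f i) (f j) B = ∫ x in B, Z i j x ∂ν)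
    (N : ℕ) (g : Fin N → F) (W : Fin N → Fin N → K → ℝ)
    (hWmeas : ∀ i j, Measurable (W i j))
    (hWint : ∀ i j, Integrable (W i j) ν)
    (hW : ∀ (i j : Fin N) (B : Set K), MeasurableSet B →
      mutualEM E.em (g i) (g j) B = ∫ x in B, W i j x ∂ν) :
    ∀ᵐ x ∂ν, ((Matrix.of fun i j : Fin N => W i j x).rank : ℕ∞)
      ≤ ⨆ M : ℕ, ((Matrix.of fun i j : Fin M => Z i j x).rank : ℕ∞) := by
  classical
  open Filter Matrix EMAaux in
  -- choose finite linear combinations of the `f k` approximating the `g i`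
  have happrox : ∀ (i : Fin N) (n : ℕ), ∃ c : ℕ →₀ ℝ,
      ‖g i - c.sum (fun k a => a • f k)‖ < (1/2 : ℝ)^n := by
    intro i n
    have hmem : g i ∈ closure (Submodule.span ℝ (Set.range f) : Set F) := hdense _
    rw [SeminormedAddCommGroup.mem_closure_iff] at hmem
    obtain ⟨b, hb, hbe⟩ := hmem ((1/2 : ℝ)^n) (by positivity)
    obtain ⟨c, hc⟩ := (Finsupp.mem_span_range_iff_exists_finsupp).mp hb
    exact ⟨c, by rwa [hc]⟩
  choose c hc using happrox
  set Mn : ℕ → ℕ := fun n => (Finset.univ.sup fun i : Fin N => (c i n).support.sup id) + 1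
    with hMn
  set h : Fin N → ℕ → F := fun i n => ∑ k ∈ Finset.range (Mn n), (c i n) k • f k with hh
  have hhc : ∀ (i : Fin N) (n : ℕ), (c i n).sum (fun k a => a • f k) = h i n := by
    intro i n
    refine Finsupp.sum_of_support_subset _ ?_ _ (fun k _ => zero_smul ℝ (f k))
    intro k hk
    simp only [Finset.mem_range, hMn]
    have h1 : k ≤ (c i n).support.sup id := Finset.le_sup (f := id) hk
    have h2 : (c i n).support.sup id ≤ Finset.univ.sup fun i : Fin N => (c i n).support.sup id :=
      Finset.le_sup (f := fun i : Fin N => (c i n).support.sup id) (Finset.mem_univ i)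
    omega
  have hdist : ∀ (i : Fin N) (n : ℕ), ‖g i - h i n‖ ≤ (1/2 : ℝ)^n := by
    intro i n
    rw [← hhc i n]
    exact (hc i n).le
  -- the density of the mutual measures of the approximants
  set D : ℕ → Fin N → Fin N → K → ℝ := fun n i j x =>
    ∑ k ∈ Finset.range (Mn n), ∑ l ∈ Finset.range (Mn n),
      (c i n) k * ((c j n) l * Z k l x) with hD
  have hDmeas : ∀ n i j, Measurable (D n i j) := by
    intro n i j
    refine Finset.measurable_sum _ fun k _ => Finset.measurable_sum _ fun l _ => ?_
    exact ((hZmeas k l).const_mul _).const_mul _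
  have hDint : ∀ n i j, Integrable (D n i j) ν := by
    intro n i j
    refine integrable_finset_sum _ fun k _ => integrable_finset_sum _ fun l _ => ?_
    exact ((hZint k l).const_mul _).const_mul _
  have hDset : ∀ (n : ℕ) (i j : Fin N) (B : Set K), MeasurableSet B →
      mutualEM E.em (h i n) (h j n) B = ∫ x in B, D n i j x ∂ν := by
    intro n i j B hB
    have hR : ∫ x in B, D n i j x ∂ν
        = ∑ k ∈ Finset.range (Mn n), ∑ l ∈ Finset.range (Mn n),
            (c i n) k * ((c j n) l * ∫ x in B, Z k l x ∂ν) := by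
      rw [hD]
      rw [integral_finset_sum _ (fun k _ => integrable_finset_sum _ fun l _ =>
        (((hZint k l).restrict).const_mul _).const_mul _)]
      refine Finset.sum_congr rfl fun k _ => ?_
      rw [integral_finset_sum _ (fun l _ => (((hZint k l).restrict).const_mul _).const_mul _)]
      refine Finset.sum_congr rfl fun l _ => ?_
      rw [MeasureTheory.integral_const_mul, MeasureTheory.integral_const_mul]
    rw [hR, hh]
    rw [EMAaux.sum_left E hB]
    refine Finset.sum_congr rfl fun k _ => ?_
    rw [EMAaux.sum_right E hB, Finset.mul_sum]
    refine Finset.sum_congr rfl fun l _ => ?_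
    rw [hZ k l B hB]
  -- pointwise rank bound for the approximant densities
  have hrank : ∀ (n : ℕ) (x : K), (Matrix.of fun i j : Fin N => D n i j x).rank
      ≤ (Matrix.of fun k l : Fin (Mn n) => Z k l x).rank := by
    intro n x
    set C : Matrix (Fin N) (Fin (Mn n)) ℝ := Matrix.of fun i k => (c i n) (k : ℕ) with hC
    set Zm : Matrix (Fin (Mn n)) (Fin (Mn n)) ℝ := Matrix.of fun k l : Fin (Mn n) => Z k l x
      with hZm
    have hfact : (Matrix.of fun i j : Fin N => D n i j x) = C * Zm * Cᵀ := by
      ext i j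
      simp only [Matrix.mul_apply, Matrix.of_apply, Matrix.transpose_apply, hC, hZm, hD]
      calc ∑ k ∈ Finset.range (Mn n), ∑ l ∈ Finset.range (Mn n),
            (c i n) k * ((c j n) l * Z k l x)
          = ∑ l ∈ Finset.range (Mn n), ∑ k ∈ Finset.range (Mn n),
            (c i n) k * ((c j n) l * Z k l x) := Finset.sum_comm
        _ = ∑ l : Fin (Mn n), ∑ k ∈ Finset.range (Mn n),
            (c i n) k * ((c j n) (l:ℕ) * Z k (l:ℕ) x) := by
            rw [← Fin.sum_univ_eq_sum_range]
        _ = ∑ l : Fin (Mn n), (∑ k : Fin (Mn n), (c i n) (k:ℕ) * Z (k:ℕ) (l:ℕ) x)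
            * (c j n) (l:ℕ) := by
            refine Finset.sum_congr rfl fun l _ => ?_
            rw [Finset.sum_mul, ← Fin.sum_univ_eq_sum_range
              (fun k => (c i n) k * ((c j n) (l:ℕ) * Z k (l:ℕ) x))]
            exact Finset.sum_congr rfl fun k _ => by ring
    rw [hfact, Matrix.mul_assoc]
    exact (Matrix.rank_mul_le_right _ _).trans (Matrix.rank_mul_le_left _ _)
  -- a.e. convergence of the approximant densities to `W`
  have hconv : ∀ᵐ x ∂ν, ∀ (i j : Fin N),
      Tendsto (fun n => D n i j x) atTop (nhds (W i j x)) := by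
    rw [ae_all_iff]
    intro i
    rw [ae_all_iff]
    intro j
    set u : ℕ → K → ℝ := fun n x => W i j x - D n i j x with hu
    have humeas : ∀ n, Measurable (u n) := fun n => (hWmeas i j).sub (hDmeas n i j)
    have huint : ∀ n, Integrable (u n) ν := fun n => (hWint i j).sub (hDint n i j)
    set Cb : ℝ := 4 * (‖g j‖ + ‖g i‖ + 1) with hCb
    have hsetbd : ∀ (n : ℕ) (B : Set K), MeasurableSet B →
        |∫ x in B, u n x ∂ν| ≤ Cb * (1/2 : ℝ)^n := by
      intro n B hB
      have h1 : ∫ x in B, u n x ∂ν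
          = mutualEM E.em (g i) (g j) B - mutualEM E.em (h i n) (h j n) B := by
        rw [hu]
        rw [integral_sub ((hWint i j).restrict) ((hDint n i j).restrict),
          ← hW i j B hB, ← hDset n i j B hB]
      have h2 : mutualEM E.em (g i) (g j) B - mutualEM E.em (h i n) (h j n) B
          = mutualEM E.em (g i - h i n) (g j) B + mutualEM E.em (h i n) (g j - h j n) B := by
        rw [EMAaux.sub_left E hB, EMAaux.sub_right E hB]
        ring
      have h3 := EMAaux.abs_le E hB (g i - h i n) (g j)
      have h4 := EMAaux.abs_le E hB (h i n) (g j - h j n)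
      have h5 := hdist i n
      have h6 := hdist j n
      have hpow : (0:ℝ) < (1/2 : ℝ)^n := by positivity
      have hpow1 : (1/2 : ℝ)^n ≤ 1 := by
        apply pow_le_one₀ <;> norm_num
      have h7 : ‖h i n‖ ≤ ‖g i‖ + 1 := by
        have he : h i n = g i - (g i - h i n) := by abel
        rw [he]
        calc ‖g i - (g i - h i n)‖ ≤ ‖g i‖ + ‖g i - h i n‖ := norm_sub_le _ _
          _ ≤ ‖g i‖ + 1 := by linarith
      rw [h1, h2]
      calc |mutualEM E.em (g i - h i n) (g j) B + mutualEM E.em (h i n) (g j - h j n) B|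
          ≤ |mutualEM E.em (g i - h i n) (g j) B| + |mutualEM E.em (h i n) (g j - h j n) B| :=
            abs_add_le _ _
        _ ≤ Cb * (1/2 : ℝ)^n := by
            rw [hCb]
            nlinarith [norm_nonneg (g i), norm_nonneg (g j), norm_nonneg (h i n),
              norm_nonneg (g i - h i n), norm_nonneg (g j - h j n),
              mul_le_mul_of_nonneg_right h5 (norm_nonneg (g j)),
              mul_le_mul h7 h6 (norm_nonneg (g j - h j n)) (by linarith [norm_nonneg (g i)])]
    have hCbnn : (0:ℝ) ≤ Cb := by
      rw [hCb]; positivity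
    have hbd' : ∀ n, ∫ x, |u n x| ∂ν ≤ (2 * Cb) * (1/2 : ℝ)^n := by
      intro n
      have := integral_abs_le_two_mul ν (u n) (humeas n) (huint n) (Cb * (1/2 : ℝ)^n)
        (hsetbd n)
      linarith
    have hae := ae_tendsto_zero_of_integral_abs_le ν u humeas huint (2 * Cb)
      (by linarith) hbd'
    filter_upwards [hae] with x hx
    have ht : Tendsto (fun n => W i j x - u n x) atTop (nhds (W i j x - 0)) :=
      tendsto_const_nhds.sub hx
    simp only [hu, sub_sub_cancel, sub_zero] at ht
    exact ht
  -- conclusion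
  filter_upwards [hconv] with x hx
  set p := ⨆ M : ℕ, ((Matrix.of fun i j : Fin M => Z i j x).rank : ℕ∞) with hp
  by_cases hptop : p = ⊤
  · rw [hptop]; exact le_top
  · set r : ℕ := ENat.toNat p with hrdef
    have hr : (r : ℕ∞) = p := ENat.coe_toNat hptop
    have hbound : ∀ n, (Matrix.of fun i j : Fin N => D n i j x).rank ≤ r := by
      intro n
      have h1 : ((Matrix.of fun k l : Fin (Mn n) => Z k l x).rank : ℕ∞) ≤ p :=
        le_iSup (fun M : ℕ => ((Matrix.of fun i j : Fin M => Z i j x).rank : ℕ∞)) (Mn n)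
      rw [← hr] at h1
      exact (hrank n x).trans (Nat.cast_le.mp h1)
    have hfin : (Matrix.of fun i j : Fin N => W i j x).rank ≤ r :=
      rank_le_of_tendsto (fun i j => hx i j) hbound
    rw [← hr]
    exact Nat.cast_le.mpr hfin
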